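/- Let p be a divisor of n. A permutation π ∈ S_n has difference sequence periodic with period dividing p if and only if there exists a triple (φ, R, k) ∈ S_p × ({0,1,…,n/p − 1})^p × Z_{n/p} with gcd(k, n/p) = 1 such that for all i ∈ {1,…,n}, π(i) = R_{i mod p}·p + φ(i mod p) + k·p·⌊(i−1)/p⌋ (values taken modulo n, with the residue i mod p represented in {1,…,p}); moreover, such a triple is unique. -/
import Mathlib


/-- The representative of `x : ZMod n` in `{1, …, n}` (so `0` represents `n`). -/
def repr1 (n : ℕ) (x : ZMod n) : ℕ := if x = 0 then n else x.val

/-- Values of `ZMod n`, embedded into `ZMod (n+1)` via representatives in `{1, …, n}`. -/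
def emb (n : ℕ) (x : ZMod n) : ZMod (n + 1) := (repr1 n x : ZMod (n + 1))

/-- `L 0 = 0` and `L i = π(i)` for `i ∈ {1,…,n}`: the listing used to build
the cycle `Y_π = (π(n) π(n−1) … π(1) 0)`. -/
def listFun (n : ℕ) (π : Equiv.Perm (ZMod n)) : ZMod (n + 1) → ZMod (n + 1) :=
  fun i => if i = 0 then 0 else emb n (π (i.val : ZMod n))

/-- The inverse listing of `listFun`. -/
def listInv (n : ℕ) (π : Equiv.Perm (ZMod n)) : ZMod (n + 1) → ZMod (n + 1) :=
  fun y => if y = 0 then 0 else emb n (π.symm (y.val : ZMod n))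

/-- The cycle `Y_π = (π(n) π(n−1) … π(1) 0)` on `{0,1,…,n}`, as a function:
it sends `L(i)` to `L(i-1)`. -/
def Yfun (n : ℕ) (π : Equiv.Perm (ZMod n)) : ZMod (n + 1) → ZMod (n + 1) :=
  fun y => listFun n π (listInv n π y - 1)

/-- `C_π = Y_π ∘ X_n`, where `X_n` is the cycle `(0 1 2 … n)`, i.e. `x ↦ x + 1`. -/
def Cfun (n : ℕ) (π : Equiv.Perm (ZMod n)) : ZMod (n + 1) → ZMod (n + 1) :=
  fun x => Yfun n π (x + 1)

/-- The strategic pile of `π ∈ S_n`: the set of values appearing strictly after `n` and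
strictly before `0` on the cycle of `C_π` containing `0` and `n` (empty if `0` and `n`
lie in different cycles). -/
def strategicPile (n : ℕ) (π : Equiv.Perm (ZMod n)) : Set (ZMod (n + 1)) :=
  {x | ∃ k m : ℕ, 0 < k ∧ k < m ∧ (Cfun n π)^[m] (n : ZMod (n + 1)) = 0 ∧
      (∀ j, 0 < j → j < m → (Cfun n π)^[j] (n : ZMod (n + 1)) ≠ 0) ∧
      (Cfun n π)^[k] (n : ZMod (n + 1)) = x}

/-- `π ∈ S_n` has maximal strategic pile. -/
def MaxPile (n : ℕ) (π : Equiv.Perm (ZMod n)) : Prop :=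
  (Even n ∧ (strategicPile n π).ncard = n - 1) ∨
  (Odd n ∧ (strategicPile n π).ncard = n - 2)

/-- The position (in `{1,…,n}`) of the value `v` in `π`. -/
def idx (n : ℕ) (π : Equiv.Perm (ZMod n)) (v : ZMod n) : ℕ := repr1 n (π.symm v)

/-- Word coordinate of the occurrence of the pointer `(p,p+1)` as the right pointer of the
entry `p`:  the entry at position `i` is given word coordinate `3*i - 1`, its left pointer
coordinate `3*i - 2` and its right pointer coordinate `3*i`. -/
def posR (n : ℕ) (π : Equiv.Perm (ZMod n)) (p : ZMod n) : ℕ := 3 * idx n π p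

/-- Word coordinate of the occurrence of the pointer `(p,p+1)` as the left pointer of the
entry `p+1`. -/
def posL (n : ℕ) (π : Equiv.Perm (ZMod n)) (p : ZMod n) : ℕ := 3 * idx n π (p + 1) - 2

/-- Two pairs of positions interleave (pattern `a b a b` or `b a b a`). -/
def Interleaved (a1 a2 b1 b2 : ℕ) : Prop :=
  (min a1 a2 < min b1 b2 ∧ min b1 b2 < max a1 a2 ∧ max a1 a2 < max b1 b2) ∨
  (min b1 b2 < min a1 a2 ∧ min a1 a2 < max b1 b2 ∧ max b1 b2 < max a1 a2)

/-- `(p, q)` is a valid pointer context for `π`: the two pointers are distinct and their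
occurrences in the pointer word of `π` appear in the order `p,q,p,q` or `q,p,q,p`. -/
def ValidContext (n : ℕ) (π : Equiv.Perm (ZMod n)) (p q : ZMod n) : Prop :=
  p ≠ q ∧ Interleaved (posR n π p) (posL n π p) (posR n π q) (posL n π q)

/-- The number of (unordered) valid pointer contexts of `π`. -/
noncomputable def numContexts (n : ℕ) (π : Equiv.Perm (ZMod n)) : ℕ :=
  {pq : ZMod n × ZMod n | ValidContext n π pq.1 pq.2}.ncard / 2

/-- `ρ ∈ S_{2n−1}` is the contraction of `π ∈ S_{2n}`, obtained by deleting the entry `2n`. -/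
def IsContraction (n : ℕ) (ρ : Equiv.Perm (ZMod (2 * n - 1)))
    (π : Equiv.Perm (ZMod (2 * n))) : Prop :=
  ∃ m : ℕ, 1 ≤ m ∧ m ≤ 2 * n ∧ π (m : ZMod (2 * n)) = ((2 * n : ℕ) : ZMod (2 * n)) ∧
    (∀ k : ℕ, 1 ≤ k → k < m →
      ρ (k : ZMod (2 * n - 1)) =
        ((repr1 (2 * n) (π (k : ZMod (2 * n))) : ℕ) : ZMod (2 * n - 1))) ∧
    (∀ k : ℕ, m ≤ k → k ≤ 2 * n - 1 →
      ρ (k : ZMod (2 * n - 1)) =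
        ((repr1 (2 * n) (π ((k + 1 : ℕ) : ZMod (2 * n))) : ℕ) : ZMod (2 * n - 1)))

/-- `M_{2n}`: the contractions of permutations in `S_{2n}` with maximal strategic pile. -/
def MsetAll (n : ℕ) : Set (Equiv.Perm (ZMod (2 * n - 1))) :=
  {ρ | ∃ π : Equiv.Perm (ZMod (2 * n)), MaxPile (2 * n) π ∧ IsContraction n ρ π}

/-- `M_{2n,k}`: the contractions of permutations in `S_{2n}` with maximal strategic pile
and exactly `k` valid pointer contexts. -/
def Mset (n k : ℕ) : Set (Equiv.Perm (ZMod (2 * n - 1))) :=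
  {ρ | ρ ∈ MsetAll n ∧ numContexts (2 * n - 1) ρ = k}

/-- Cyclic shift by `a`: `C_a(π)(x) = π(x - a)`. -/
def Cshift (n : ℕ) (a : ZMod n) (π : Equiv.Perm (ZMod n)) : Equiv.Perm (ZMod n) :=
  (Equiv.subRight a).trans π

/-- Translation by `b`: `T_b(π)(x) = π(x) + b`. -/
def Tshift (n : ℕ) (b : ZMod n) (π : Equiv.Perm (ZMod n)) : Equiv.Perm (ZMod n) :=
  π.trans (Equiv.addRight b)

/-- `φ(a,b,π) = C_a(T_b(π))`, i.e. `x ↦ π(x-a) + b`. -/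
def phiAct (n : ℕ) (a b : ZMod n) (π : Equiv.Perm (ZMod n)) : Equiv.Perm (ZMod n) :=
  Cshift n a (Tshift n b π)

/-- The difference sequence of `π`. -/
def Dseq (n : ℕ) (π : Equiv.Perm (ZMod n)) : ZMod n → ZMod n :=
  fun k => π (k + 1) - π k

/-- The difference sequence of `π` is periodic with (least) period `p`, `0 < p < n`. -/
def PeriodicWith (n : ℕ) (π : Equiv.Perm (ZMod n)) (p : ℕ) : Prop :=
  0 < p ∧ p < n ∧ (∀ k : ZMod n, Dseq n π (k + (p : ZMod n)) = Dseq n π k) ∧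
    ∀ q : ℕ, 0 < q → q < p → ¬ ∀ k : ZMod n, Dseq n π (k + (q : ZMod n)) = Dseq n π k

section Helpers
variable {n : ℕ}

lemma repr1_cast [NeZero n] (x : ZMod n) : ((repr1 n x : ℕ) : ZMod n) = x := by
  unfold repr1
  split_ifs with h
  · simp [h]
  · exact ZMod.natCast_rightInverse x

lemma repr1_pos [NeZero n] (x : ZMod n) : 1 ≤ repr1 n x := by
  unfold repr1
  split_ifs with h
  · exact Nat.pos_of_ne_zero (NeZero.ne n)
  · exact Nat.pos_of_ne_zero (by simpa [ZMod.val_eq_zero] using h)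

lemma repr1_le [NeZero n] (x : ZMod n) : repr1 n x ≤ n := by
  unfold repr1
  split_ifs with h
  · exact le_refl n
  · exact (ZMod.val_lt x).le

lemma cast_inj_Icc [NeZero n] {a b : ℕ} (ha1 : 1 ≤ a) (ha2 : a ≤ n) (hb1 : 1 ≤ b)
    (hb2 : b ≤ n) (h : (a : ZMod n) = (b : ZMod n)) : a = b := by
  have := congrArg ZMod.val h
  rw [ZMod.val_natCast, ZMod.val_natCast] at this
  rcases eq_or_lt_of_le ha2 with rfl | ha
  · rcases eq_or_lt_of_le hb2 with rfl | hb
    · rfl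
    · rw [Nat.mod_self, Nat.mod_eq_of_lt hb] at this; omega
  · rcases eq_or_lt_of_le hb2 with rfl | hb
    · rw [Nat.mod_self, Nat.mod_eq_of_lt ha] at this; omega
    · rw [Nat.mod_eq_of_lt ha, Nat.mod_eq_of_lt hb] at this; exact this

lemma repr1_natCast [NeZero n] {i : ℕ} (h1 : 1 ≤ i) (h2 : i ≤ n) :
    repr1 n ((i : ℕ) : ZMod n) = i :=
  cast_inj_Icc (repr1_pos _) (repr1_le _) h1 h2 (by rw [repr1_cast])

lemma repr1_injective [NeZero n] : Function.Injective (repr1 n) := by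
  intro a b h
  have := repr1_cast (n := n) a
  rw [h, repr1_cast] at this
  exact this.symm

lemma mydiv_helper {p s r : ℕ} (hp : 0 < p) (hr1 : 1 ≤ r) (hr2 : r ≤ p) :
    (s * p + r - 1) / p = s :=
  Nat.div_eq_of_lt_le (by omega) (by rw [add_mul, one_mul]; omega)

lemma decomp {p : ℕ} [NeZero p] {v : ℕ} (hv : 1 ≤ v) :
    v = ((v - 1) / p) * p + repr1 p ((v : ℕ) : ZMod p) := by
  have hp : 0 < p := Nat.pos_of_ne_zero (NeZero.ne p)
  set q := (v - 1) / p with hq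
  set r := (v - 1) % p with hr
  have hrp : r < p := Nat.mod_lt _ hp
  have hv' : v = q * p + (r + 1) := by
    have h0 := Nat.div_add_mod (v - 1) p
    rw [← hq, ← hr] at h0
    rw [mul_comm q p]
    omega
  have hcast : ((v : ℕ) : ZMod p) = ((r + 1 : ℕ) : ZMod p) := by
    rw [hv']; push_cast; simp [ZMod.natCast_self]
  rw [hcast, repr1_natCast (by omega) (by omega)]
  omega

lemma repr1_mod {p : ℕ} [NeZero n] (hdvd : p ∣ n) (x : ZMod n) :
    ((repr1 n x : ℕ) : ZMod p) = ((x.val : ℕ) : ZMod p) := by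
  unfold repr1
  split_ifs with h
  · rw [h, ZMod.val_zero]
    simpa using (ZMod.natCast_eq_zero_iff n p).mpr hdvd
  · rfl

end Helpers

/-- From the explicit formula, `π` shifts by `k·p` under adding `p`. -/
lemma formula_shift (n p m : ℕ) (hn : 0 < n) (hp : 0 < p) (hm : 0 < m) (hnm : n = p * m)
    (π : Equiv.Perm (ZMod n)) (φ : Equiv.Perm (ZMod p)) (R : ZMod p → ℕ) (k : ℕ)
    (hform : ∀ i : ℕ, 1 ≤ i → i ≤ n →
      π ((i : ℕ) : ZMod n) =
        ((R ((i : ℕ) : ZMod p) * p + repr1 p (φ ((i : ℕ) : ZMod p)) +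
            k * p * ((i - 1) / p) : ℕ) : ZMod n)) :
    ∀ x : ZMod n, π (x + (p : ZMod n)) = π x + ((k * p : ℕ) : ZMod n) := by
  haveI : NeZero n := ⟨hn.ne'⟩
  haveI : NeZero p := ⟨hp.ne'⟩
  have hnm2 : m * p = n := by rw [hnm, mul_comm]
  intro x
  set i := repr1 n x with hi
  have h1 : 1 ≤ i := repr1_pos x
  have h2 : i ≤ n := repr1_le x
  have hx : ((i : ℕ) : ZMod n) = x := repr1_cast x
  by_cases hcase : i + p ≤ n
  · have hxp : x + (p : ZMod n) = ((i + p : ℕ) : ZMod n) := by rw [← hx]; push_cast; ring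
    have hmodp : ((i + p : ℕ) : ZMod p) = ((i : ℕ) : ZMod p) := by
      push_cast; simp [ZMod.natCast_self]
    have hdiv : (i + p - 1) / p = (i - 1) / p + 1 := by
      have h3 : i + p - 1 = (i - 1) + p := by omega
      rw [h3, Nat.add_div_right _ hp]
    have e1 := hform i h1 h2
    have e2 := hform (i + p) (by omega) hcase
    rw [hmodp, hdiv] at e2
    rw [hxp, e2, ← hx, e1]
    push_cast
    ring
  · -- wrap-around case
    set i' := i + p - n with hi'
    have hi'1 : 1 ≤ i' := by omega
    have hi'p : i' ≤ p := by omega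
    have hi'n : i' ≤ n := by
      have : p ≤ n := by nlinarith
      omega
    have hxp : x + (p : ZMod n) = ((i' : ℕ) : ZMod n) := by
      rw [← hx]
      have h3 : i + p = i' + n := by omega
      have : ((i + p : ℕ) : ZMod n) = ((i' + n : ℕ) : ZMod n) := by rw [h3]
      push_cast at this ⊢
      simp [ZMod.natCast_self] at this
      rw [← this]
    have hmodp : ((i' : ℕ) : ZMod p) = ((i : ℕ) : ZMod p) := by
      have h3 : i' + n = i + p := by omega
      have : ((i' + n : ℕ) : ZMod p) = ((i + p : ℕ) : ZMod p) := by rw [h3]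
      push_cast at this
      simpa [ZMod.natCast_self, (ZMod.natCast_eq_zero_iff n p).mpr ⟨m, hnm⟩]
        using this
    have hdiv' : (i' - 1) / p = 0 := Nat.div_eq_of_lt (by omega)
    have hdiv : (i - 1) / p = m - 1 := by
      apply Nat.div_eq_of_lt_le
      · rw [Nat.sub_mul, one_mul, hnm2]; omega
      · rw [Nat.sub_add_cancel hm, hnm2]; omega
    have e1 := hform i h1 h2
    have e2 := hform i' hi'1 hi'n
    rw [hmodp, hdiv'] at e2
    rw [hxp, e2, ← hx, e1, hdiv]
    have hkey : R ((i:ℕ):ZMod p) * p + repr1 p (φ ((i:ℕ):ZMod p)) + k * p * (m-1) + k * p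
        = R ((i:ℕ):ZMod p) * p + repr1 p (φ ((i:ℕ):ZMod p)) + k * p * 0 + k * n := by
      have h5 : m - 1 + 1 = m := by omega
      have : k * p * (m - 1) + k * p = k * p * m := by
        calc k * p * (m - 1) + k * p = k * p * ((m - 1) + 1) := by ring
          _ = k * p * m := by rw [h5]
      have h4 : k * p * m = k * n := by rw [hnm]; ring
      omega
    have := congrArg (fun t : ℕ => ((t : ℕ) : ZMod n)) hkey
    push_cast [ZMod.natCast_self] at this ⊢
    linear_combination -this

/-- Uniqueness of the triple. -/
lemma triple_unique (n p m : ℕ) (hn : 0 < n) (hp : 0 < p) (hm : 0 < m) (hnm : n = p * m)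
    (π : Equiv.Perm (ZMod n))
    (t s : Equiv.Perm (ZMod p) × (ZMod p → ℕ) × ℕ)
    (htR : ∀ i, t.2.1 i < m) (htk : t.2.2 < m)
    (hsR : ∀ i, s.2.1 i < m) (hsk : s.2.2 < m)
    (htf : ∀ i : ℕ, 1 ≤ i → i ≤ n →
      π ((i : ℕ) : ZMod n) =
        ((t.2.1 ((i : ℕ) : ZMod p) * p + repr1 p (t.1 ((i : ℕ) : ZMod p)) +
            t.2.2 * p * ((i - 1) / p) : ℕ) : ZMod n))
    (hsf : ∀ i : ℕ, 1 ≤ i → i ≤ n →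
      π ((i : ℕ) : ZMod n) =
        ((s.2.1 ((i : ℕ) : ZMod p) * p + repr1 p (s.1 ((i : ℕ) : ZMod p)) +
            s.2.2 * p * ((i - 1) / p) : ℕ) : ZMod n)) :
    t = s := by
  haveI : NeZero n := ⟨hn.ne'⟩
  haveI : NeZero p := ⟨hp.ne'⟩
  have hpn : p ≤ n := by nlinarith
  have key : ∀ x : ZMod p, t.2.1 x = s.2.1 x ∧ t.1 x = s.1 x := by
    intro x
    set i := repr1 p x with hi
    have h1 : 1 ≤ i := repr1_pos x
    have h2 : i ≤ p := repr1_le x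
    have hx : ((i : ℕ) : ZMod p) = x := repr1_cast x
    have hdiv : (i - 1) / p = 0 := Nat.div_eq_of_lt (by omega)
    have e1 := htf i h1 (h2.trans hpn)
    have e2 := hsf i h1 (h2.trans hpn)
    rw [hx, hdiv, Nat.mul_zero, Nat.add_zero] at e1 e2
    rw [e1] at e2
    have b1t := repr1_pos (t.1 x); have b2t := repr1_le (t.1 x)
    have b1s := repr1_pos (s.1 x); have b2s := repr1_le (s.1 x)
    have hbt : t.2.1 x * p + repr1 p (t.1 x) ≤ n := by nlinarith [htR x]
    have hbs : s.2.1 x * p + repr1 p (s.1 x) ≤ n := by nlinarith [hsR x]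
    have heq : t.2.1 x * p + repr1 p (t.1 x) = s.2.1 x * p + repr1 p (s.1 x) :=
      cast_inj_Icc (by omega) hbt (by omega) hbs e2
    have hRt : t.2.1 x = s.2.1 x := by
      have d1 := mydiv_helper (s := t.2.1 x) hp b1t b2t
      have d2 := mydiv_helper (s := s.2.1 x) hp b1s b2s
      rw [heq] at d1
      omega
    refine ⟨hRt, repr1_injective ?_⟩
    rw [hRt] at heq
    omega
  have hkk : t.2.2 = s.2.2 := by
    rcases eq_or_lt_of_le (Nat.one_le_iff_ne_zero.mpr hm.ne') with hm1 | hm2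
    · omega
    · have hp1n : p + 1 ≤ n := by nlinarith
      have e1 := htf (p + 1) (by omega) hp1n
      have e2 := hsf (p + 1) (by omega) hp1n
      have hc1 : ((p + 1 : ℕ) : ZMod p) = ((1 : ℕ) : ZMod p) := by
        push_cast; simp [ZMod.natCast_self]
      have hdiv : (p + 1 - 1) / p = 1 := by
        rw [Nat.add_sub_cancel, Nat.div_self hp]
      rw [hc1, hdiv] at e1 e2
      rw [e1, (key ((1 : ℕ) : ZMod p)).1, (key ((1 : ℕ) : ZMod p)).2] at e2
      have h3 : ((t.2.2 * p : ℕ) : ZMod n) = ((s.2.2 * p : ℕ) : ZMod n) := by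
        push_cast at e2 ⊢
        linear_combination e2
      have h4 := congrArg ZMod.val h3
      rw [ZMod.val_natCast, ZMod.val_natCast] at h4
      have h5 : t.2.2 * p < n := by nlinarith
      have h6 : s.2.2 * p < n := by nlinarith
      rw [Nat.mod_eq_of_lt h5, Nat.mod_eq_of_lt h6] at h4
      exact Nat.eq_of_mul_eq_mul_right hp h4
  rcases t with ⟨tφ, tR, tk⟩
  rcases s with ⟨sφ, sR, sk⟩
  simp only [Prod.mk.injEq]
  exact ⟨Equiv.ext fun x => (key x).2, funext fun x => (key x).1, hkk⟩

/-- Let `p ∣ n`.  A permutation `π ∈ S_n` has difference sequence periodic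
with period dividing `p` iff there is a (unique) triple
`(φ, R, k) ∈ S_p × ({0,…,n/p - 1})^p × Z_{n/p}` with `gcd(k, n/p) = 1` such that for all
`i ∈ {1,…,n}`, `π(i) = R_{i mod p}·p + φ(i mod p) + k·p·⌊(i-1)/p⌋` (mod `n`). -/
theorem stmt10 (n p : ℕ) (hn : 0 < n) (hp : 0 < p) (hdvd : p ∣ n)
    (π : Equiv.Perm (ZMod n)) :
    (∀ k : ZMod n, Dseq n π (k + (p : ZMod n)) = Dseq n π k) ↔
    (∃! t : Equiv.Perm (ZMod p) × (ZMod p → ℕ) × ℕ,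
      (∀ i : ZMod p, t.2.1 i < n / p) ∧ t.2.2 < n / p ∧ Nat.gcd t.2.2 (n / p) = 1 ∧
      ∀ i : ℕ, 1 ≤ i → i ≤ n →
        π ((i : ℕ) : ZMod n) =
          ((t.2.1 ((i : ℕ) : ZMod p) * p + repr1 p (t.1 ((i : ℕ) : ZMod p)) +
              t.2.2 * p * ((i - 1) / p) : ℕ) : ZMod n)) := by
  haveI : NeZero n := ⟨hn.ne'⟩
  haveI : NeZero p := ⟨hp.ne'⟩
  obtain ⟨m, hnm⟩ := hdvd
  have hdvd' : p ∣ n := ⟨m, hnm⟩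
  have hm : 0 < m := by
    rcases Nat.eq_zero_or_pos m with rfl | h
    · omega
    · exact h
  have hmdiv : n / p = m := by rw [hnm, Nat.mul_div_cancel_left _ hp]
  have hnm2 : m * p = n := by rw [hnm, mul_comm]
  have hpn : p ≤ n := by nlinarith
  have hnzero : ((n : ℕ) : ZMod p) = 0 := (ZMod.natCast_eq_zero_iff n p).mpr hdvd'
  rw [hmdiv]
  constructor
  · intro hper
    -- Step A: the shift π(x+p) - π(x) is constant
    have keystep : ∀ x : ZMod n, π (x + 1 + (p : ZMod n)) - π (x + 1) =
        π (x + (p : ZMod n)) - π x := by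
      intro x
      have h := hper x
      unfold Dseq at h
      have harg : x + (p : ZMod n) + 1 = x + 1 + (p : ZMod n) := by ring
      rw [harg] at h
      linear_combination h
    have hconstNat : ∀ j : ℕ, π (((j : ℕ) : ZMod n) + p) - π ((j : ℕ) : ZMod n) =
        π ((0 : ZMod n) + p) - π 0 := by
      intro j
      induction j with
      | zero => norm_num
      | succ j ih =>
        push_cast
        push_cast at ih
        rw [keystep (j : ZMod n)]
        exact ih
    set c := π ((0 : ZMod n) + p) - π 0 with hcdef
    have hconst : ∀ x : ZMod n, π (x + (p : ZMod n)) = π x + c := by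
      intro x
      have h := hconstNat x.val
      rw [ZMod.natCast_rightInverse x] at h
      linear_combination h
    -- Step B: iterate
    have hiter : ∀ (x : ZMod n) (j : ℕ),
        π (x + ((j * p : ℕ) : ZMod n)) = π x + (j : ZMod n) * c := by
      intro x j
      induction j with
      | zero => simp
      | succ j ih =>
        have h1 : (((j + 1) * p : ℕ) : ZMod n) = ((j * p : ℕ) : ZMod n) + (p : ZMod n) := by
          push_cast; ring
        rw [h1, ← add_assoc, hconst, ih]
        push_cast
        ring
    -- Step C: m * c = 0 and c = k₀ * p
    have hmc : (m : ZMod n) * c = 0 := by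
      have h := hiter 0 m
      have h0 : ((m * p : ℕ) : ZMod n) = 0 := by rw [hnm2]; exact ZMod.natCast_self n
      rw [h0, add_zero] at h
      linear_combination h.symm
    have hdvdc : n ∣ m * c.val := by
      have h : ((m * c.val : ℕ) : ZMod n) = 0 := by
        push_cast
        rw [ZMod.natCast_rightInverse c]
        exact hmc
      exact (ZMod.natCast_eq_zero_iff _ n).mp h
    have hpc : p ∣ c.val := by
      obtain ⟨u, hu⟩ := hdvdc
      refine ⟨u, ?_⟩
      have h : m * c.val = m * (p * u) := by rw [hu, hnm]; ring
      exact Nat.eq_of_mul_eq_mul_left hm h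
    set k₀ := c.val / p with hk₀def
    have hck : c.val = k₀ * p := by rw [hk₀def, Nat.div_mul_cancel hpc]
    have hk₀m : k₀ < m := by
      have h1 : c.val < n := ZMod.val_lt c
      rw [hck] at h1
      by_contra hcon
      push_neg at hcon
      have : m * p ≤ k₀ * p := Nat.mul_le_mul_right p hcon
      omega
    have hcast_c : c = ((k₀ * p : ℕ) : ZMod n) := by
      rw [← hck]; exact (ZMod.natCast_rightInverse c).symm
    -- Step D: gcd(k₀, m) = 1
    have hcop : Nat.gcd k₀ m = 1 := by
      by_contra hne
      set d := Nat.gcd k₀ m with hd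
      have hd0 : 0 < d := Nat.gcd_pos_of_pos_right _ hm
      have hd1 : 1 < d := by omega
      obtain ⟨m', hm'⟩ := Nat.gcd_dvd_right k₀ m
      obtain ⟨k', hk'⟩ := Nat.gcd_dvd_left k₀ m
      rw [← hd] at hm' hk' 
      have hm'0 : 0 < m' := by
        rcases Nat.eq_zero_or_pos m' with rfl | h
        · omega
        · exact h
      have hm'm : m' < m := by nlinarith
      have h := hiter 0 m'
      have hzc : ((m' : ℕ) : ZMod n) * c = 0 := by
        rw [hcast_c, ← Nat.cast_mul]
        have he : m' * (k₀ * p) = k' * n := by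
          rw [hk', hnm, hm']; ring
        rw [he]
        push_cast [ZMod.natCast_self]
        ring
      rw [hzc, add_zero] at h
      have hz0 : ((m' * p : ℕ) : ZMod n) = 0 := by
        have h9 := π.injective h
        rwa [zero_add] at h9
      have hdv := (ZMod.natCast_eq_zero_iff _ n).mp hz0
      have hlt : m' * p < n := by
        rw [← hnm2]
        exact (Nat.mul_lt_mul_right hp).mpr hm'm
      have hpos : 0 < m' * p := Nat.mul_pos hm'0 hp
      have := Nat.le_of_dvd hpos hdv
      omega
    -- modular reduction lemmas
    have cp_eq : ∀ a : ZMod n, ((a.val : ℕ) : ZMod p) = ZMod.castHom hdvd' (ZMod p) a := by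
      intro a; rw [ZMod.castHom_apply, ZMod.natCast_val]
    have fc0 : ZMod.castHom hdvd' (ZMod p) c = 0 := by
      rw [← cp_eq, hck]
      push_cast [ZMod.natCast_self]
      ring
    have cp_pi : ∀ a b : ZMod n, ((a.val : ℕ) : ZMod p) = ((b.val : ℕ) : ZMod p) →
        (((π a).val : ℕ) : ZMod p) = (((π b).val : ℕ) : ZMod p) := by
      intro a b hab
      have hsub : ((a - b).val : ZMod p) = 0 := by
        rw [cp_eq, map_sub, ← cp_eq, ← cp_eq, hab, sub_self]
      obtain ⟨s, hs⟩ := (ZMod.natCast_eq_zero_iff _ p).mp hsub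
      have hab' : a = b + ((s * p : ℕ) : ZMod n) := by
        have h := ZMod.natCast_rightInverse (a - b)
        rw [hs] at h
        have : ((s * p : ℕ) : ZMod n) = a - b := by rw [mul_comm]; exact h
        rw [this]; ring
      rw [hab', hiter b s, cp_eq, cp_eq, map_add, map_mul, fc0, mul_zero, add_zero]
    have cpnat : ∀ u : ℕ, ((((u : ℕ) : ZMod n)).val : ZMod p) = (u : ZMod p) := by
      intro u; rw [cp_eq, map_natCast]
    -- Step F: the permutation φ
    set lift : ZMod p → ZMod n := fun i => ((repr1 p i : ℕ) : ZMod n) with hlift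
    set fφ : ZMod p → ZMod p := fun i => (((π (lift i)).val : ℕ) : ZMod p) with hfφ
    have cplift : ∀ i : ZMod p, (((lift i).val : ℕ) : ZMod p) = i := by
      intro i
      rw [hlift]
      simp only
      rw [cpnat, repr1_cast]
    have hsurj : Function.Surjective fφ := by
      intro b
      set y := π.symm (lift b) with hy
      refine ⟨((y.val : ℕ) : ZMod p), ?_⟩
      rw [hfφ]
      simp only
      have h1 : (((lift ((y.val : ℕ) : ZMod p)).val : ℕ) : ZMod p) = ((y.val : ℕ) : ZMod p) :=
        cplift _
      have h2 := cp_pi _ _ h1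
      rw [h2, hy, Equiv.apply_symm_apply]
      exact cplift b
    set φeq : Equiv.Perm (ZMod p) :=
      Equiv.ofBijective fφ (Finite.surjective_iff_bijective.mp hsurj) with hφeq
    have hφap : ∀ i : ZMod p, φeq i = fφ i := fun i => rfl
    set R : ZMod p → ℕ := fun i => (repr1 n (π (lift i)) - 1) / p with hR
    have hRlt : ∀ i : ZMod p, R i < m := by
      intro i
      rw [hR]
      simp only
      rw [Nat.div_lt_iff_lt_mul hp]
      have := repr1_le (π (lift i))
      have h1 : repr1 n (π (lift i)) - 1 < n := by
        have := repr1_pos (π (lift i)); omega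
      omega
    have hval : ∀ i : ZMod p, repr1 n (π (lift i)) = R i * p + repr1 p (φeq i) := by
      intro i
      have hd := decomp (p := p) (repr1_pos (π (lift i)))
      have hmm : ((repr1 n (π (lift i)) : ℕ) : ZMod p) = φeq i := by
        rw [repr1_mod hdvd', hφap]
      rw [hmm] at hd
      exact hd
    refine ⟨⟨φeq, R, k₀⟩, ⟨hRlt, hk₀m, hcop, ?_⟩, ?_⟩
    · intro i h1 h2
      simp only
      set x := ((i : ℕ) : ZMod p) with hx
      set r := repr1 p x with hr
      set j := (i - 1) / p with hj
      have hd := decomp (p := p) h1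
      rw [← hx, ← hr, ← hj] at hd
      have hliftx : lift x = ((r : ℕ) : ZMod n) := rfl
      have hsplit : ((i : ℕ) : ZMod n) = lift x + ((j * p : ℕ) : ZMod n) := by
        rw [hliftx]
        conv_lhs => rw [hd]
        push_cast
        ring
      rw [hsplit, hiter (lift x) j]
      have hπl : π (lift x) = ((repr1 n (π (lift x)) : ℕ) : ZMod n) :=
        (repr1_cast _).symm
      rw [hπl, hval x, hcast_c]
      push_cast
      ring
    · rintro ⟨ψ, S, l⟩ ⟨hS, hl, -, hsf⟩
      exact triple_unique n p m hn hp hm hnm π ⟨ψ, S, l⟩ ⟨φeq, R, k₀⟩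
        hS hl hRlt hk₀m hsf (by
          intro i h1 h2
          simp only
          set x := ((i : ℕ) : ZMod p) with hx
          set r := repr1 p x with hr
          set j := (i - 1) / p with hj
          have hd := decomp (p := p) h1
          rw [← hx, ← hr, ← hj] at hd
          have hliftx : lift x = ((r : ℕ) : ZMod n) := rfl
          have hsplit : ((i : ℕ) : ZMod n) = lift x + ((j * p : ℕ) : ZMod n) := by
            rw [hliftx]
            conv_lhs => rw [hd]
            push_cast
            ring
          rw [hsplit, hiter (lift x) j]
          have hπl : π (lift x) = ((repr1 n (π (lift x)) : ℕ) : ZMod n) :=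
            (repr1_cast _).symm
          rw [hπl, hval x, hcast_c]
          push_cast
          ring)
  · rintro ⟨⟨φ, R, k⟩, ⟨hR, hk, -, hform⟩, -⟩
    have hsh := formula_shift n p m hn hp hm hnm π φ R k hform
    intro x
    unfold Dseq
    have h1 := hsh (x + 1)
    have h2 := hsh x
    rw [show x + (p : ZMod n) + 1 = (x + 1) + (p : ZMod n) by ring, h1, h2]
    ring
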